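/- Let r be an odd prime and μ_i = (-1)^i ζ_{8r}^{2i(i+2)} for 0 ≤ i ≤ r-2. The Vandermonde determinant det[μ_i^j]_{0 ≤ i,j ≤ r-2} = ±∏_{i<j}(μ_i - μ_j) is associated in Z[ζ_{8r}] to (1+i)^{(r-1)/2} · (1 + ζ_{8r}^4)^{(r-1)(r-3)/4}, where i = ζ_{8r}^{2r}. -/

import Mathlib

open Finset Polynomial

lemma one_sub_pow_eq (x : ℂ) (k : ℕ) :
    1 - x ^ k = (1 - x) * ∑ i ∈ Finset.range k, x ^ i := by
  have h := geom_sum_mul x k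
  linear_combination h

lemma not_dvd_of_lt {m k : ℕ} (h1 : 0 < k) (h2 : k < m) : ¬ m ∣ k :=
  fun hd => absurd (Nat.le_of_dvd h1 hd) (by omega)

lemma coprime_four {n : ℕ} (h : n % 2 = 1) : Nat.Coprime n 4 := by
  have h2 : Nat.Coprime n 2 :=
    Nat.coprime_comm.mp ((Nat.prime_two.coprime_iff_not_dvd).mpr (by omega))
  have : (4 : ℕ) = 2 ^ 2 := by norm_num
  rw [this]
  exact h2.pow_right 2

lemma assoc_one_sub {S : Subring ℂ} {γ : ℂ} (hγS : γ ∈ S) {m : ℕ}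
    (hm : IsPrimitiveRoot γ m) (hm1 : 0 < m) {p q : ℕ}
    (hp : p.Coprime m) (hq : q.Coprime m) (hq1 : γ ^ q ≠ 1) :
    ∃ u ∈ S, ∃ v ∈ S, u * v = 1 ∧ 1 - γ ^ p = u * (1 - γ ^ q) := by
  haveI : NeZero m := ⟨hm1.ne'⟩
  have hγp : (γ ^ p) ^ m = 1 := by
    rw [← pow_mul, mul_comm, pow_mul, hm.pow_eq_one, one_pow]
  have hγq : (γ ^ q) ^ m = 1 := by
    rw [← pow_mul, mul_comm, pow_mul, hm.pow_eq_one, one_pow]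
  obtain ⟨k, -, hk⟩ := (hm.pow_of_coprime q hq).eq_pow_of_pow_eq_one hγp
  obtain ⟨l, -, hl⟩ := (hm.pow_of_coprime p hp).eq_pow_of_pow_eq_one hγq
  set u := ∑ i ∈ Finset.range k, (γ ^ q) ^ i with hu
  set v := ∑ i ∈ Finset.range l, (γ ^ p) ^ i with hv
  have h1 : 1 - γ ^ p = (1 - γ ^ q) * u := by
    rw [← hk]; exact one_sub_pow_eq _ _
  have h2 : 1 - γ ^ q = (1 - γ ^ p) * v := by
    rw [← hl]; exact one_sub_pow_eq _ _
  have huv : u * v = 1 := by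
    have h3 : (1 - γ ^ q) * (u * v) = (1 - γ ^ q) * 1 := by
      rw [mul_one]; rw [h1] at h2; linear_combination -h2
    exact mul_left_cancel₀ (sub_ne_zero.mpr (Ne.symm hq1)) h3
  refine ⟨u, ?_, v, ?_, huv, by rw [h1]; ring⟩
  · exact Subring.sum_mem _ fun i _ => Subring.pow_mem _ (Subring.pow_mem _ hγS q) i
  · exact Subring.sum_mem _ fun i _ => Subring.pow_mem _ (Subring.pow_mem _ hγS p) i

lemma prod_one_sub_primroot {ζ : ℂ} {r : ℕ} (hr : 1 < r) (hζ : IsPrimitiveRoot ζ r) :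
    ∏ i ∈ Finset.Ico 1 r, (1 - ζ ^ i) = r := by
  have hpoly : (X : ℂ[X]) ^ r - C 1 = ∏ i ∈ Finset.range r, (X - C (ζ ^ i * 1)) :=
    X_pow_sub_C_eq_prod hζ (by omega) (one_pow r)
  simp only [mul_one] at hpoly
  have hsplit : (X : ℂ[X]) ^ r - 1 = (X - 1) * ∏ i ∈ Finset.Ico 1 r, (X - C (ζ ^ i)) := by
    rw [show ((1 : ℂ[X])) = C 1 from (map_one C).symm, hpoly, Finset.range_eq_Ico,
      Finset.prod_eq_prod_Ico_succ_bot (by omega : 0 < r)]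
    simp [map_one]
  have hgeom : (X : ℂ[X]) ^ r - 1 = (X - 1) * ∑ i ∈ Finset.range r, (X : ℂ[X]) ^ i := by
    have := geom_sum_mul (X : ℂ[X]) r
    linear_combination -this
  have hc : ∏ i ∈ Finset.Ico 1 r, ((X : ℂ[X]) - C (ζ ^ i)) = ∑ i ∈ Finset.range r, (X : ℂ[X]) ^ i := by
    apply mul_left_cancel₀ (a := (X : ℂ[X]) - 1)
    · have := X_sub_C_ne_zero (1 : ℂ)
      simpa using this
    · rw [← hsplit, ← hgeom]
  have := congrArg (Polynomial.eval 1) hc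
  simpa [Polynomial.eval_prod, Polynomial.eval_finset_sum] using this

lemma unit_one_sub {S : Subring ℂ} {η : ℂ} (hηS : η ∈ S) {r : ℕ}
    (hr : 1 < r) (hodd : Odd r) (hη : IsPrimitiveRoot η (4 * r)) :
    ∃ v ∈ S, (1 - η) * v = 1 := by
  have hη1 : η ^ (4 * r) = 1 := hη.pow_eq_one
  have h2r : η ^ (2 * r) = -1 := by
    have hsq : (η ^ (2 * r)) ^ 2 = 1 := by rw [← pow_mul]; convert hη1 using 2; ring
    have hne : η ^ (2 * r) ≠ 1 := hη.pow_ne_one_of_pos_of_lt (by omega) (by omega)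
    rcases mul_eq_zero.mp (show (η ^ (2*r) - 1) * (η ^ (2*r) + 1) = 0 by
      linear_combination hsq) with h | h
    · exact absurd (by linear_combination h) hne
    · linear_combination h
  -- divisibility by 2
  have h3r : η ^ (3 * r) = - η ^ r := by
    have : η ^ (3 * r) = η ^ (2 * r) * η ^ r := by rw [← pow_add]; ring_nf
    rw [this, h2r]; ring
  set c1 : ℂ := (∑ i ∈ Finset.range r, η ^ i) * (1 - η ^ (3 * r)) with hc1
  have hc1S : c1 ∈ S :=
    Subring.mul_mem _ (Subring.sum_mem _ fun i _ => Subring.pow_mem _ hηS i)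
      (Subring.sub_mem _ (Subring.one_mem _) (Subring.pow_mem _ hηS _))
  have hd2 : (1 - η) * c1 = 2 := by
    rw [hc1, ← mul_assoc, ← one_sub_pow_eq]
    linear_combination (η ^ r - 1) * h3r - h2r
  -- divisibility by r
  have hζ : IsPrimitiveRoot (η ^ 4) r := hη.pow (by omega) rfl
  set c2 : ℂ := (∑ i ∈ Finset.range 4, η ^ i) * ∏ i ∈ Finset.Ico 2 r, (1 - (η ^ 4) ^ i) with hc2
  have hc2S : c2 ∈ S :=
    Subring.mul_mem _ (Subring.sum_mem _ fun i _ => Subring.pow_mem _ hηS i)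
      (Subring.prod_mem _ fun i _ => Subring.sub_mem _ (Subring.one_mem _)
        (Subring.pow_mem _ (Subring.pow_mem _ hηS 4) i))
  have hdr : (1 - η) * c2 = r := by
    rw [hc2, ← mul_assoc, ← one_sub_pow_eq]
    have : (1 - (η ^ 4) ^ 1) * ∏ i ∈ Finset.Ico 2 r, (1 - (η ^ 4) ^ i)
        = ∏ i ∈ Finset.Ico 1 r, (1 - (η ^ 4) ^ i) :=
      (Finset.prod_eq_prod_Ico_succ_bot hr (fun i => 1 - (η ^ 4) ^ i)).symm
    rw [show (1 - η ^ 4) = (1 - (η ^ 4) ^ 1) by ring, this,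
      prod_one_sub_primroot hr hζ]
  obtain ⟨t, ht⟩ := hodd
  refine ⟨c2 - (t : ℂ) * c1, Subring.sub_mem _ hc2S
    (Subring.mul_mem _ (natCast_mem S t) hc1S), ?_⟩
  have hcast : (r : ℂ) = 2 * t + 1 := by exact_mod_cast congrArg (Nat.cast : ℕ → ℂ) ht
  linear_combination hdr - (t : ℂ) * hd2 + hcast


lemma parity_card (a : ℕ) : ∀ b : ℕ,
    ((Finset.Ioc a b).filter (fun j => (a + j) % 2 = 0)).card = (b - a) / 2 := by
  intro b
  induction b with
  | zero => simp [Finset.Ioc_eq_empty_of_le (by omega : (0:ℕ) ≤ a)]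
  | succ b ih =>
    rcases le_or_gt (b + 1) a with hb | hb
    · have h0 : Finset.Ioc a (b + 1) = ∅ := Finset.Ioc_eq_empty_of_le (by omega)
      rw [h0]; simp; omega
    · have hins : Finset.Ioc a (b + 1) = insert (b + 1) (Finset.Ioc a b) := by
        ext j; simp [Finset.mem_Ioc]; omega
      rw [hins, Finset.filter_insert]
      by_cases hp : (a + (b + 1)) % 2 = 0
      · rw [if_pos hp, Finset.card_insert_of_notMem (by simp [Finset.mem_Ioc])]
        omega
      · rw [if_neg hp]; omega

lemma sum_halves (t : ℕ) : ∑ k ∈ Finset.range (2 * t), k / 2 = t * (t - 1) := by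
  induction t with
  | zero => simp
  | succ t ih =>
    rw [show 2 * (t + 1) = 2 * t + 1 + 1 by ring, Finset.sum_range_succ,
      Finset.sum_range_succ, ih]
    rcases t with _ | s
    · simp
    · have h1 : (2 * (s + 1)) / 2 = s + 1 := by omega
      have h2 : (2 * (s + 1) + 1) / 2 = s + 1 := by omega
      rw [h1, h2]
      simp only [Nat.add_sub_cancel]
      ring

lemma inner_count1 {r i : ℕ} :
    (∑ j ∈ Finset.Ioc i (r - 2), (if i + j + 2 = r then 1 else 0)) =
      (if 2 * i + 2 < r then 1 else 0) := by
  rw [← Finset.card_filter]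
  by_cases h : 2 * i + 2 < r
  · rw [if_pos h]
    have : (Finset.Ioc i (r-2)).filter (fun j => i + j + 2 = r) = {r - 2 - i} := by
      ext j; simp [Finset.mem_Ioc]; omega
    rw [this, Finset.card_singleton]
  · rw [if_neg h]
    have : (Finset.Ioc i (r-2)).filter (fun j => i + j + 2 = r) = ∅ := by
      ext j; simp [Finset.mem_Ioc]; omega
    rw [this, Finset.card_empty]

lemma inner_count2 {r i : ℕ} :
    (∑ j ∈ Finset.Ioc i (r - 2), (if (i + j) % 2 = 0 then 1 else 0)) = (r - 2 - i) / 2 := by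
  rw [← Finset.card_filter, parity_card]

lemma count1 {r : ℕ} (hodd : Odd r) :
    ∑ i ∈ Finset.range (r - 1), ∑ j ∈ Finset.Ioc i (r - 2),
      (if i + j + 2 = r then 1 else 0) = (r - 1) / 2 := by
  simp only [inner_count1]
  rw [← Finset.card_filter]
  have : (Finset.range (r-1)).filter (fun i => 2 * i + 2 < r) = Finset.range ((r-1)/2) := by
    ext i; simp [Finset.mem_range]; omega
  rw [this, Finset.card_range]

lemma count2 {r : ℕ} (hodd : Odd r) (hr : 3 ≤ r) :
    ∑ i ∈ Finset.range (r - 1), ∑ j ∈ Finset.Ioc i (r - 2),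
      (if (i + j) % 2 = 0 then 1 else 0) = (r - 1) * (r - 3) / 4 := by
  simp only [inner_count2]
  obtain ⟨t, ht⟩ := hodd
  have h1 : ∑ i ∈ Finset.range (r - 1), (r - 2 - i) / 2
      = ∑ i ∈ Finset.range (r - 1), (r - 1 - 1 - i) / 2 :=
    Finset.sum_congr rfl fun i _ => by omega
  rw [h1, Finset.sum_range_reflect (fun k => k / 2) (r - 1)]
  have e : ∑ k ∈ Finset.range (r - 1), k / 2 = t * (t - 1) := by
    rw [show r - 1 = 2 * t by omega]; exact sum_halves t
  rw [e]
  have h2 : (r - 1) * (r - 3) = 4 * (t * (t - 1)) := by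
    have : t ≥ 1 := by omega
    have e1 : r - 1 = 2 * t := by omega
    have e3 : r - 3 = 2 * (t - 1) := by omega
    rw [e1, e3]; ring
  rw [h2, Nat.mul_div_cancel_left _ (by norm_num : 0 < 4)]

/-- For `r` an odd prime, `α` a primitive `8r`-th root of unity, and
`μ i = (-1)^i α^(2i(i+2))`, the Vandermonde determinant `det [μ i ^ j]` for
`0 ≤ i,j ≤ r-2` is associated in `ℤ[α]` to
`(1 + α^(2r))^((r-1)/2) · (1 + α^4)^((r-1)(r-3)/4)`, where `α^(2r) = i`. -/
theorem vandermonde_det_assoc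
    (r : ℕ) (hr : r.Prime) (hodd : Odd r)
    (α : ℂ) (hα : IsPrimitiveRoot α (8 * r))
    (μ : ℕ → ℂ) (hμ : ∀ i, μ i = (-1) ^ i * α ^ (2 * i * (i + 2))) :
    ∃ u ∈ Subring.closure ({α} : Set ℂ),
      (∃ v ∈ Subring.closure ({α} : Set ℂ), u * v = 1) ∧
      Matrix.det (fun i j : Fin (r - 1) => μ (i : ℕ) ^ (j : ℕ))
        = u * ((1 + α ^ (2 * r)) ^ ((r - 1) / 2) *
               (1 + α ^ 4) ^ ((r - 1) * (r - 3) / 4)) := by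
  set R := Subring.closure ({α} : Set ℂ) with hRdef
  have hαR : α ∈ R := Subring.subset_closure rfl
  have hro : r % 2 = 1 := Nat.odd_iff.mp hodd
  have hr3 : 3 ≤ r := by have := hr.two_le; omega
  have hα1 : α ^ (8 * r) = 1 := hα.pow_eq_one
  have hneg : α ^ (4 * r) = -1 :=
    (hα.pow (by omega) (by ring : 8 * r = 4 * r * 2)).eq_neg_one_of_two_right
  have hαinv : ∀ k : ℕ, α ^ k * (α ^ (8 * r - 1)) ^ k = 1 := by
    intro k
    rw [← mul_pow]
    have h1 : α * α ^ (8 * r - 1) = 1 := by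
      rw [← pow_succ']
      rw [show 8 * r - 1 + 1 = 8 * r by omega]
      exact hα1
    rw [h1, one_pow]
  set f : ℕ → ℕ := fun i => 4 * r * i + 2 * i * (i + 2) with hfdef
  have hμf : ∀ i : ℕ, μ i = α ^ f i := by
    intro i
    rw [hμ, hfdef]
    have h1 : ((-1 : ℂ)) ^ i = (α ^ (4 * r)) ^ i := by rw [hneg]
    rw [h1, ← pow_mul, ← pow_add]
  have hstep : ∀ i j : ℕ, i < j →
      μ j - μ i = α ^ f i * (α ^ (2 * (j - i) * (i + j + 2 + 2 * r)) - 1) := by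
    intro i j hij
    have hfj : f j = f i + 2 * (j - i) * (i + j + 2 + 2 * r) := by
      obtain ⟨k, rfl⟩ : ∃ k, j = i + k + 1 := ⟨j - i - 1, by omega⟩
      have h1 : i + k + 1 - i = k + 1 := by omega
      simp only [hfdef, h1]
      ring
    rw [hμf, hμf, hfj, pow_add]
    ring
  have hpowR : ∀ k : ℕ, α ^ k ∈ R := fun k => Subring.pow_mem R hαR k
  -- classification of each factor
  have key : ∀ i j : ℕ, i < j → j ≤ r - 2 → ∃ u v : ℂ, u ∈ R ∧ v ∈ R ∧ u * v = 1 ∧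
      μ j - μ i = u * ((1 + α ^ (2 * r)) ^ (if i + j + 2 = r then 1 else 0) *
        (1 + α ^ 4) ^ (if (i + j) % 2 = 0 then 1 else 0)) := by
    intro i j hij hjr
    have hD := hstep i j hij
    set D := 2 * (j - i) * (i + j + 2 + 2 * r) with hDdef
    by_cases hc1 : i + j + 2 = r
    · -- √2 case
      have hx2 : ¬ (i + j) % 2 = 0 := by omega
      rw [if_pos hc1, if_neg hx2, pow_one, pow_zero, mul_one]
      have ht4 : IsPrimitiveRoot (α ^ (2 * r)) 4 := hα.pow (by omega) (by ring)
      have hDe : D = 2 * r * (3 * (j - i)) := by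
        rw [hDdef, show i + j + 2 + 2 * r = 3 * r by omega]; ring
      have hαD : α ^ D = (α ^ (2 * r)) ^ (3 * (j - i)) := by rw [hDe, pow_mul]
      have hodd3 : (3 * (j - i)) % 2 = 1 := by omega
      obtain ⟨u, huR, v, hvR, huv, hass⟩ :=
        assoc_one_sub (hpowR (2 * r)) ht4 (by norm_num) (coprime_four hodd3)
          (coprime_four (by norm_num) : Nat.Coprime 3 4)
          (ht4.pow_ne_one_of_pos_of_lt (by norm_num) (by norm_num))
      have ht2 : (α ^ (2 * r)) ^ 2 = -1 := by
        rw [← pow_mul, show 2 * r * 2 = 4 * r by ring, hneg]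
      have ht3 : (α ^ (2 * r)) ^ 3 = -(α ^ (2 * r)) := by
        rw [pow_succ, ht2]; ring
      refine ⟨-(α ^ f i) * u, -((α ^ (8 * r - 1)) ^ f i) * v, ?_, ?_, ?_, ?_⟩
      · exact Subring.mul_mem _ (Subring.neg_mem _ (hpowR _)) huR
      · exact Subring.mul_mem _ (Subring.neg_mem _ (Subring.pow_mem _ (hpowR _) _)) hvR
      · linear_combination (u * v) * (hαinv (f i)) + huv
      · rw [hD, hαD]
        linear_combination (-(α ^ f i)) * hass + (α ^ f i * u) * ht3
    · by_cases hc2 : (i + j) % 2 = 0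
      · -- (1 + α^4) case
        rw [if_neg hc1, if_pos hc2, pow_zero, one_mul, pow_one]
        have hγ : IsPrimitiveRoot (α ^ 8) r := hα.pow (by omega) rfl
        set a' := (j - i) / 2 with ha'def
        set s' := (i + j + 2 + 2 * r) / 2 with hs'def
        have ha' : j - i = 2 * a' := by omega
        have hs' : i + j + 2 + 2 * r = 2 * s' := by omega
        have hDe : D = 8 * (a' * s') := by rw [hDdef, ha', hs']; ring
        have hra' : ¬ r ∣ a' := not_dvd_of_lt (by omega) (by omega)
        have hrs' : ¬ r ∣ s' := by
          rintro ⟨c, hc⟩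
          have hb1 : 2 * r < 2 * s' := by omega
          have hb2 : 2 * s' < 4 * r := by omega
          rw [hc] at hb1 hb2
          rcases Nat.lt_or_ge c 2 with h | h
          · have : r * c ≤ r * 1 := Nat.mul_le_mul_left r (by omega)
            omega
          · have : r * 2 ≤ r * c := Nat.mul_le_mul_left r h
            omega
        have hp : Nat.Coprime (a' * s') r := by
          refine Nat.Coprime.symm ((hr.coprime_iff_not_dvd).mpr ?_)
          intro h
          rcases (Nat.Prime.dvd_mul hr).mp h with h | h
          · exact hra' h
          · exact hrs' h
        have hq : Nat.Coprime ((r + 1) / 2) r :=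
          Nat.Coprime.symm ((hr.coprime_iff_not_dvd).mpr
            (not_dvd_of_lt (by omega) (by omega)))
        obtain ⟨u, huR, v, hvR, huv, hass⟩ :=
          assoc_one_sub (hpowR 8) hγ (by omega) hp hq
            (hγ.pow_ne_one_of_pos_of_lt (by omega) (by omega))
        have hq4 : (α ^ 8) ^ ((r + 1) / 2) = -α ^ 4 := by
          rw [← pow_mul, show 8 * ((r + 1) / 2) = 4 * r + 4 by omega, pow_add, hneg]
          ring
        have hαD : α ^ D = (α ^ 8) ^ (a' * s') := by rw [hDe, pow_mul]
        refine ⟨-(α ^ f i) * u, -((α ^ (8 * r - 1)) ^ f i) * v, ?_, ?_, ?_, ?_⟩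
        · exact Subring.mul_mem _ (Subring.neg_mem _ (hpowR _)) huR
        · exact Subring.mul_mem _ (Subring.neg_mem _ (Subring.pow_mem _ (hpowR _) _)) hvR
        · linear_combination (u * v) * (hαinv (f i)) + huv
        · rw [hD, hαD]
          linear_combination (-(α ^ f i)) * hass + (α ^ f i * u) * hq4
      · -- unit case
        rw [if_neg hc1, if_neg hc2, pow_zero, pow_zero, mul_one]
        have hβ : IsPrimitiveRoot (α ^ 2) (4 * r) := hα.pow (by omega) (by ring)
        set m := (j - i) * (i + j + 2 + 2 * r) with hmdef
        have hDe : D = 2 * m := by rw [hDdef, hmdef]; ring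
        have hmodd : m % 2 = 1 := by
          have h1 : Odd (j - i) := by rw [Nat.odd_iff]; omega
          have h2 : Odd (i + j + 2 + 2 * r) := by rw [Nat.odd_iff]; omega
          rw [hmdef]
          exact Nat.odd_iff.mp (h1.mul h2)
        have hrm : ¬ r ∣ m := by
          rw [hmdef]
          intro h
          rcases (Nat.Prime.dvd_mul hr).mp h with h | h
          · exact not_dvd_of_lt (by omega) (by omega) h
          · rcases h with ⟨c, hc⟩
            have hb1 : 2 * r < i + j + 2 + 2 * r := by omega
            have hb2 : i + j + 2 + 2 * r < 4 * r := by omega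
            have hb3 : i + j + 2 + 2 * r ≠ 3 * r := by omega
            rw [hc] at hb1 hb2 hb3
            have h2 : 2 < c := by
              by_contra hcc
              have : r * c ≤ r * 2 := Nat.mul_le_mul_left r (by omega)
              omega
            have h4 : c < 4 := by
              by_contra hcc
              have : r * 4 ≤ r * c := Nat.mul_le_mul_left r (by omega)
              omega
            have hc3 : c = 3 := by omega
            rw [hc3] at hb3
            exact hb3 (by ring)
        have hcop : Nat.Coprime m (4 * r) := by
          refine Nat.Coprime.mul_right (coprime_four hmodd) ?_
          exact Nat.Coprime.symm ((hr.coprime_iff_not_dvd).mpr hrm)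
        have hprim : IsPrimitiveRoot (α ^ D) (4 * r) := by
          have h1 := hβ.pow_of_coprime m hcop
          rw [← pow_mul] at h1
          rw [hDe]
          exact h1
        obtain ⟨v, hvR, hv1⟩ := unit_one_sub (hpowR D) (by omega) hodd hprim
        refine ⟨α ^ f i * (α ^ D - 1), -((α ^ (8 * r - 1)) ^ f i) * v, ?_, ?_, ?_, ?_⟩
        · exact Subring.mul_mem _ (hpowR _)
            (Subring.sub_mem _ (hpowR _) (Subring.one_mem _))
        · exact Subring.mul_mem _ (Subring.neg_mem _ (Subring.pow_mem _ (hpowR _) _)) hvR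
        · linear_combination (v * (1 - α ^ D)) * (hαinv (f i)) + hv1
        · rw [hD, mul_one]
  -- choose the unit factors
  choose! u v huR hvR huv hfac using key
  -- rewrite determinant as a double product
  have hsub : r - 1 - 1 = r - 2 := by omega
  have hdet : Matrix.det (fun i j : Fin (r - 1) => μ (i : ℕ) ^ (j : ℕ))
      = ∏ i ∈ Finset.range (r - 1), ∏ j ∈ Finset.Ioc i (r - 2), (μ j - μ i) := by
    have hv : (fun i j : Fin (r - 1) => μ (i : ℕ) ^ (j : ℕ))
        = Matrix.vandermonde (fun i : Fin (r - 1) => μ (i : ℕ)) := rfl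
    rw [hv, Matrix.det_vandermonde]
    calc ∏ i : Fin (r - 1), ∏ j ∈ Finset.Ioi i, (μ (j : ℕ) - μ (i : ℕ))
        = ∏ i : Fin (r - 1), ∏ j ∈ Finset.Ioc (i : ℕ) (r - 1 - 1), (μ j - μ (i : ℕ)) := by
          refine Finset.prod_congr rfl fun i _ => ?_
          rw [show Finset.Ioc (i : ℕ) (r - 1 - 1) = Finset.Ioo (i : ℕ) (r - 1) by
            ext x; simp only [Finset.mem_Ioc, Finset.mem_Ioo]; omega,
            ← Fin.map_valEmbedding_Ioi, Finset.prod_map]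
          rfl
      _ = ∏ i ∈ Finset.range (r - 1), ∏ j ∈ Finset.Ioc i (r - 1 - 1), (μ j - μ i) :=
          Fin.prod_univ_eq_prod_range
            (fun k => ∏ j ∈ Finset.Ioc k (r - 1 - 1), (μ j - μ k)) (r - 1)
      _ = ∏ i ∈ Finset.range (r - 1), ∏ j ∈ Finset.Ioc i (r - 2), (μ j - μ i) := by
          rw [hsub]
  have hbounds : ∀ i ∈ Finset.range (r - 1), ∀ j ∈ Finset.Ioc i (r - 2),
      i < j ∧ j ≤ r - 2 := by
    intro i hi j hj
    exact Finset.mem_Ioc.mp hj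
  have hmain : (∏ i ∈ Finset.range (r - 1), ∏ j ∈ Finset.Ioc i (r - 2), (μ j - μ i))
      = (∏ i ∈ Finset.range (r - 1), ∏ j ∈ Finset.Ioc i (r - 2), u i j) *
        ((1 + α ^ (2 * r)) ^ ((r - 1) / 2) *
         (1 + α ^ 4) ^ ((r - 1) * (r - 3) / 4)) := by
    have h1 : (∏ i ∈ Finset.range (r - 1), ∏ j ∈ Finset.Ioc i (r - 2), (μ j - μ i))
        = ∏ i ∈ Finset.range (r - 1), ∏ j ∈ Finset.Ioc i (r - 2),
            (u i j * ((1 + α ^ (2 * r)) ^ (if i + j + 2 = r then 1 else 0) *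
              (1 + α ^ 4) ^ (if (i + j) % 2 = 0 then 1 else 0))) := by
      refine Finset.prod_congr rfl fun i hi => Finset.prod_congr rfl fun j hj => ?_
      obtain ⟨h1, h2⟩ := hbounds i hi j hj
      exact hfac i j h1 h2
    rw [h1]
    simp only [Finset.prod_mul_distrib, Finset.prod_pow_eq_pow_sum]
    rw [count1 hodd, count2 hodd hr3]
  refine ⟨∏ i ∈ Finset.range (r - 1), ∏ j ∈ Finset.Ioc i (r - 2), u i j, ?_,
    ⟨∏ i ∈ Finset.range (r - 1), ∏ j ∈ Finset.Ioc i (r - 2), v i j, ?_, ?_⟩, ?_⟩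
  · exact Subring.prod_mem _ fun i hi => Subring.prod_mem _ fun j hj =>
      huR i j (hbounds i hi j hj).1 (hbounds i hi j hj).2
  · exact Subring.prod_mem _ fun i hi => Subring.prod_mem _ fun j hj =>
      hvR i j (hbounds i hi j hj).1 (hbounds i hi j hj).2
  · rw [← Finset.prod_mul_distrib]
    refine Finset.prod_eq_one fun i hi => ?_
    rw [← Finset.prod_mul_distrib]
    exact Finset.prod_eq_one fun j hj =>
      huv i j (hbounds i hi j hj).1 (hbounds i hi j hj).2
  · rw [hdet, hmain]
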